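/- Let α ∈ (0,1), F_p ∈ (0,1), F_n ∈ (0,1), and b ≥ 0, define g : ℝ → ℝ by g(x) = F_p·α^x + (1 − F_p)·α^{x + (b − x)/F_n}, and set b₂* = F_n·log_α(F_p / ((1 − F_p)·(1/F_n − 1))), where log_α t = (ln t)/(ln α). If 0 ≤ b₂* ≤ b, then g attains its minimum over the interval [0, b] uniquely at x* = b − b₂*, and the minimum value is g(x*) = α^{b − b₂*}·F_p/(1 − F_n). -/

import Mathlib

/-- For `α, F_p, F_n ∈ (0,1)`, `b ≥ 0`,
`g(x) = F_p·α^x + (1 − F_p)·α^{x + (b − x)/F_n}` and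
`b₂* = F_n·log_α (F_p / ((1 − F_p)(1/F_n − 1)))` with `log_α t = ln t / ln α`:
if `0 ≤ b₂* ≤ b` then `g` attains its minimum over `[0, b]` uniquely at `x* = b − b₂*`,
with minimum value `g(x*) = α^{b − b₂*}·F_p/(1 − F_n)`. -/
theorem sandwiched_learned_bloom_filter_optimum
    (α Fp Fn b : ℝ)
    (hα : α ∈ Set.Ioo (0 : ℝ) 1) (hFp : Fp ∈ Set.Ioo (0 : ℝ) 1)
    (hFn : Fn ∈ Set.Ioo (0 : ℝ) 1) (hb : 0 ≤ b)
    (b₂ : ℝ)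
    (hb₂ : b₂ = Fn * (Real.log (Fp / ((1 - Fp) * (1 / Fn - 1))) / Real.log α))
    (hb₂0 : 0 ≤ b₂) (hb₂b : b₂ ≤ b) :
    (fun x : ℝ => Fp * α ^ x + (1 - Fp) * α ^ (x + (b - x) / Fn)) (b - b₂)
        = α ^ (b - b₂) * Fp / (1 - Fn)
      ∧ ∀ x ∈ Set.Icc (0 : ℝ) b, x ≠ b - b₂ →
        (fun x : ℝ => Fp * α ^ x + (1 - Fp) * α ^ (x + (b - x) / Fn)) (b - b₂)
          < (fun x : ℝ => Fp * α ^ x + (1 - Fp) * α ^ (x + (b - x) / Fn)) x := by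
  obtain ⟨hα0, hα1⟩ := hα
  obtain ⟨hFp0, hFp1⟩ := hFp
  obtain ⟨hFn0, hFn1⟩ := hFn
  have hc : Real.log α < 0 := Real.log_neg hα0 hα1
  have hc' : Real.log α ≠ 0 := ne_of_lt hc
  have hFp1' : 0 < 1 - Fp := by linarith
  have hFn1' : 0 < 1 - Fn := by linarith
  have hFn' : Fn ≠ 0 := ne_of_gt hFn0
  have hone : (0:ℝ) < 1 / Fn - 1 := by
    have : 1 < 1 / Fn := by rw [lt_div_iff₀ hFn0]; linarith
    linarith
  have hKpos : 0 < Fp / ((1 - Fp) * (1 / Fn - 1)) := by positivity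
  -- key exponential value
  have hK : α ^ (b₂ / Fn) = Fp / ((1 - Fp) * (1 / Fn - 1)) := by
    have he : b₂ / Fn = Real.log (Fp / ((1 - Fp) * (1 / Fn - 1))) / Real.log α := by
      rw [hb₂]; field_simp
    rw [he, Real.rpow_def_of_pos hα0]
    rw [mul_div_cancel₀ _ hc', Real.exp_log hKpos]
  have hApos : (0:ℝ) < α ^ (b - b₂) := Real.rpow_pos_of_pos hα0 _
  -- key identity
  have hkey : (1 - Fp) * α ^ ((b - b₂) + b₂ / Fn)
      = Fp * α ^ (b - b₂) * Fn / (1 - Fn) := by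
    rw [Real.rpow_add hα0, hK]
    field_simp
  have hbb : b - (b - b₂) = b₂ := by ring
  have hfirst : Fp * α ^ (b - b₂) + (1 - Fp) * α ^ ((b - b₂) + b₂ / Fn)
      = α ^ (b - b₂) * Fp / (1 - Fn) := by
    rw [hkey]
    field_simp
    ring
  constructor
  · simp only
    rw [hbb]
    exact hfirst
  · intro x hx hxne
    simp only
    rw [hbb, hfirst]
    set c := Real.log α with hcdef
    set u := x - (b - b₂) with hu
    have hu0 : u ≠ 0 := sub_ne_zero.mpr hxne
    have hE1 : α ^ x = α ^ (b - b₂) * Real.exp (c * u) := by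
      have hx' : x = (b - b₂) + u := by rw [hu]; ring
      rw [hx', Real.rpow_add hα0, Real.rpow_def_of_pos hα0 u]
    have hE2 : α ^ (x + (b - x) / Fn)
        = α ^ ((b - b₂) + b₂ / Fn) * Real.exp (c * (u - u / Fn)) := by
      have hx' : x + (b - x) / Fn = ((b - b₂) + b₂ / Fn) + (u - u / Fn) := by
        rw [hu]; field_simp; ring
      rw [hx', Real.rpow_add hα0, Real.rpow_def_of_pos hα0 (u - u / Fn)]
    rw [hE1, hE2, ← mul_assoc (1 - Fp), hkey]
    have hQpos : 0 < Fp * α ^ (b - b₂) * Fn / (1 - Fn) := by positivity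
    have hPApos : 0 < Fp * α ^ (b - b₂) := by positivity
    have h1 : c * u + 1 < Real.exp (c * u) :=
      Real.add_one_lt_exp (mul_ne_zero hc' hu0)
    have h2 : c * (u - u / Fn) + 1 ≤ Real.exp (c * (u - u / Fn)) :=
      Real.add_one_le_exp _
    have hz : Fp * α ^ (b - b₂) * (c * u)
        + (Fp * α ^ (b - b₂) * Fn / (1 - Fn)) * (c * (u - u / Fn)) = 0 := by
      field_simp
      ring
    have m1 : Fp * α ^ (b - b₂) * (c * u + 1)
        < Fp * α ^ (b - b₂) * Real.exp (c * u) :=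
      (mul_lt_mul_iff_right₀ hPApos).mpr h1
    have m2 : (Fp * α ^ (b - b₂) * Fn / (1 - Fn)) * (c * (u - u / Fn) + 1)
        ≤ (Fp * α ^ (b - b₂) * Fn / (1 - Fn)) * Real.exp (c * (u - u / Fn)) :=
      (mul_le_mul_iff_right₀ hQpos).mpr h2
    have hid : α ^ (b - b₂) * Fp / (1 - Fn)
        = Fp * α ^ (b - b₂) + Fp * α ^ (b - b₂) * Fn / (1 - Fn) := by
      field_simp; ring
    clear_value c u
    nlinarith [m1, m2, hz, hid]
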